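/- Let K[x₁,…,x_k] be a polynomial ring over a field K and let I be the ideal generated by x_i^{f_i} for 1 ≤ i ≤ k and by all products x_i x_j with i ≠ j, where each f_i ≥ 1. Then the maximal index of nilpotency of a nilpotent element of K[x₁,…,x_k]/I equals the maximum of the f_i. -/

import Mathlib

open MvPolynomial in
/-- The ideal `⟨x_i^{f_i} (1 ≤ i ≤ k), x_i x_j (i ≠ j)⟩` of `K[x₁,…,x_k]`. -/
noncomputable def truncIdeal (K : Type*) [Field K] {k : ℕ} (f : Fin k → ℕ) :
    Ideal (MvPolynomial (Fin k) K) :=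
  Ideal.span ((Set.range fun i => X i ^ f i) ∪
    {p | ∃ i j : Fin k, i ≠ j ∧ p = X i * X j})

open MvPolynomial Finsupp in
lemma truncIdeal_eq (K : Type*) [Field K] {k : ℕ} (f : Fin k → ℕ) :
    truncIdeal K f = Ideal.span ((fun s => monomial s (1 : K)) ''
      ((Set.range fun i => single i (f i)) ∪
        {s | ∃ i j : Fin k, i ≠ j ∧ s = single i 1 + single j 1})) := by
  unfold truncIdeal
  congr 1
  rw [Set.image_union]
  congr 1
  · ext p
    simp only [Set.mem_range, Set.mem_image]
    constructor
    · rintro ⟨i, rfl⟩; exact ⟨single i (f i), ⟨i, rfl⟩, X_pow_eq_monomial.symm⟩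
    · rintro ⟨s, ⟨i, rfl⟩, rfl⟩; exact ⟨i, X_pow_eq_monomial⟩
  · ext p
    simp only [Set.mem_setOf_eq, Set.mem_image]
    constructor
    · rintro ⟨i, j, hij, rfl⟩
      exact ⟨single i 1 + single j 1, ⟨i, j, hij, rfl⟩, by
        rw [monomial_add_single, ← X_pow_eq_monomial, pow_one, pow_one]⟩
    · rintro ⟨s, ⟨i, j, hij, rfl⟩, rfl⟩
      exact ⟨i, j, hij, by rw [monomial_add_single, ← X_pow_eq_monomial, pow_one, pow_one]⟩

open MvPolynomial Finsupp in
lemma mem_truncIdeal_iff (K : Type*) [Field K] {k : ℕ} (f : Fin k → ℕ)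
    {p : MvPolynomial (Fin k) K} :
    p ∈ truncIdeal K f ↔ ∀ m ∈ p.support,
      (∃ i, single i (f i) ≤ m) ∨ (∃ i j : Fin k, i ≠ j ∧ single i 1 + single j 1 ≤ m) := by
  rw [truncIdeal_eq, mem_ideal_span_monomial_image]
  constructor
  · intro h m hm
    obtain ⟨si, hsi, hle⟩ := h m hm
    rcases hsi with ⟨i, rfl⟩ | ⟨i, j, hij, rfl⟩
    · exact Or.inl ⟨i, hle⟩
    · exact Or.inr ⟨i, j, hij, hle⟩
  · intro h m hm
    rcases h m hm with ⟨i, hle⟩ | ⟨i, j, hij, hle⟩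
    · exact ⟨single i (f i), Or.inl ⟨i, rfl⟩, hle⟩
    · exact ⟨single i 1 + single j 1, Or.inr ⟨i, j, hij, rfl⟩, hle⟩

open MvPolynomial Finsupp in
/-- monomials in the support of `p ^ n` have degree at least `n` if `p` has no constant term -/
lemma deg_ge_of_mem_support_pow {K : Type*} [Field K] {k : ℕ}
    {p : MvPolynomial (Fin k) K} (hp : constantCoeff p = 0) :
    ∀ n : ℕ, ∀ m ∈ (p ^ n).support, n ≤ ∑ i, m i := by
  intro n
  induction n with
  | zero => intro m _; exact Nat.zero_le _
  | succ n ih =>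
    intro m hm
    rw [pow_succ'] at hm
    have := MvPolynomial.support_mul p (p ^ n) hm
    rw [Finset.mem_add] at this
    obtain ⟨a, ha, b, hb, rfl⟩ := this
    have ha0 : a ≠ 0 := by
      rintro rfl
      exact (MvPolynomial.mem_support_iff.mp ha) hp
    obtain ⟨i, hi⟩ := Finsupp.ne_iff.mp ha0
    have h1 : 1 ≤ ∑ i, a i :=
      Nat.one_le_iff_ne_zero.mpr (fun h => hi (by
        simpa using (Finset.sum_eq_zero_iff.mp h i (Finset.mem_univ i))))
    calc n + 1 = 1 + n := by ring
    _ ≤ (∑ i, a i) + ∑ i, b i := Nat.add_le_add h1 (ih b hb)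
    _ = ∑ i, (a + b) i := by rw [← Finset.sum_add_distrib]; rfl

/-- In `K[x₁,…,x_k] / ⟨x_i^{f_i}, x_i x_j (i ≠ j)⟩` (with all `f_i ≥ 1`), the maximal
index of nilpotency of a nilpotent element equals `max_i f_i`. -/
theorem max_nilpotency_index {K : Type*} [Field K] {k : ℕ} (hk : 0 < k)
    (f : Fin k → ℕ) (hf : ∀ i, 1 ≤ f i) :
    IsGreatest
      {m : ℕ | ∃ r : MvPolynomial (Fin k) K ⧸ truncIdeal K f,
        IsNilpotent r ∧ r ^ m = 0 ∧ ∀ l, r ^ l = 0 → m ≤ l}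
      (Finset.univ.sup f) := by
  classical
  haveI : NeZero k := ⟨hk.ne'⟩
  obtain ⟨i₀, -, hi₀⟩ := Finset.exists_mem_eq_sup Finset.univ Finset.univ_nonempty f
  set N := Finset.univ.sup f with hN
  -- X i₀ ^ l ∈ I ↔ f i₀ ≤ l
  have key : ∀ l : ℕ, (MvPolynomial.X i₀ : MvPolynomial (Fin k) K) ^ l ∈ truncIdeal K f ↔ f i₀ ≤ l := by
    intro l
    rw [mem_truncIdeal_iff]
    have hsupp : (MvPolynomial.X (R := K) i₀ ^ l).support = {Finsupp.single i₀ l} := by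
      rw [MvPolynomial.X_pow_eq_monomial, MvPolynomial.support_monomial]
      simp
    constructor
    · intro h
      have := h (Finsupp.single i₀ l) (by rw [hsupp]; exact Finset.mem_singleton_self _)
      have hval : ∀ a, a ≠ i₀ → (Finsupp.single i₀ l) a = 0 :=
        fun a ha => Finsupp.single_eq_of_ne' (Ne.symm ha)
      rcases this with ⟨i, hle⟩ | ⟨i, j, hij, hle⟩
      · by_cases hii : i = i₀
        · subst hii
          have hi := hle i
          simpa [Finsupp.single_eq_same] using hi
        · have hi := hle i
          rw [hval i hii, Nat.le_zero, Finsupp.single_eq_same] at hi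
          exact absurd hi (Nat.one_le_iff_ne_zero.mp (hf i))
      · exfalso
        have hii : i = i₀ := by
          by_contra h
          have hi := hle i
          rw [hval i h, Nat.le_zero] at hi
          simp [Finsupp.single_eq_same] at hi
        have hjj : j = i₀ := by
          by_contra h
          have hj := hle j
          rw [hval j h, Nat.le_zero] at hj
          simp [Finsupp.single_eq_same] at hj
        exact hij (hii.trans hjj.symm)
    · intro h m hm
      rw [hsupp, Finset.mem_singleton] at hm
      subst hm
      refine Or.inl ⟨i₀, fun a => ?_⟩
      rcases eq_or_ne a i₀ with rfl | ha
      · simpa using h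
      · simp [Finsupp.single_apply, if_neg (Ne.symm ha)]
  constructor
  · -- membership: X i₀ has index exactly N = f i₀
    refine ⟨Ideal.Quotient.mk _ (MvPolynomial.X i₀), ?_, ?_, ?_⟩
    · exact ⟨f i₀, by
        rw [← map_pow, Ideal.Quotient.eq_zero_iff_mem]
        exact (key (f i₀)).mpr le_rfl⟩
    · rw [← map_pow, Ideal.Quotient.eq_zero_iff_mem]
      exact (key N).mpr (hi₀ ▸ le_rfl)
    · intro l hl
      rw [← map_pow, Ideal.Quotient.eq_zero_iff_mem, key] at hl
      exact hi₀ ▸ hl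
  · -- upper bound
    rintro m ⟨r, ⟨n, hn⟩, -, hmin⟩
    obtain ⟨p, rfl⟩ := Ideal.Quotient.mk_surjective r
    -- constant coefficient of p is zero
    have hIc : truncIdeal K f ≤ RingHom.ker (MvPolynomial.constantCoeff (R := K) (σ := Fin k)) := by
      rw [truncIdeal, Ideal.span_le]
      rintro q (⟨i, rfl⟩ | ⟨i, j, hij, rfl⟩) <;>
        simp [RingHom.mem_ker, zero_pow (Nat.one_le_iff_ne_zero.mp (hf _))]
    have hpn : p ^ n ∈ truncIdeal K f := by
      rwa [← map_pow, Ideal.Quotient.eq_zero_iff_mem] at hn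
    have hn0 : n ≠ 0 := by
      rintro rfl
      have := hIc hpn
      simp [RingHom.mem_ker] at this
    have hc : MvPolynomial.constantCoeff p = 0 := by
      have := hIc hpn
      rw [RingHom.mem_ker, map_pow] at this
      exact pow_eq_zero_iff hn0 |>.mp this
    -- p ^ N ∈ I
    have hNpos : 1 ≤ N := le_trans (hf i₀) (hi₀ ▸ le_rfl)
    have hpN : p ^ N ∈ truncIdeal K f := by
      rw [mem_truncIdeal_iff]
      intro mo hmo
      have hdeg : N ≤ ∑ i, mo i := deg_ge_of_mem_support_pow hc N mo hmo
      by_cases h2 : ∃ i j : Fin k, i ≠ j ∧ mo i ≠ 0 ∧ mo j ≠ 0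
      · obtain ⟨i, j, hij, hi, hj⟩ := h2
        refine Or.inr ⟨i, j, hij, fun a => ?_⟩
        simp only [Finsupp.add_apply, Finsupp.single_apply]
        rcases eq_or_ne a i with rfl | hai
        · rw [if_pos rfl, if_neg hij.symm]; omega
        · rw [if_neg (by exact fun h => hai h.symm)]
          rcases eq_or_ne a j with rfl | haj
          · rw [if_pos rfl]; omega
          · rw [if_neg (fun h => haj h.symm)]; omega
      · push_neg at h2
        -- all of mo is concentrated on one variable
        have hmo0 : mo ≠ 0 := by
          rintro rfl
          simp at hdeg; omega
        obtain ⟨i, hi⟩ := Finsupp.ne_iff.mp hmo0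
        simp only [Finsupp.coe_zero, Pi.zero_apply] at hi
        have hall : ∀ j, j ≠ i → mo j = 0 := by
          intro j hj
          by_contra hjne
          exact hjne (h2 i j (Ne.symm hj) hi)
        have hmi : ∑ a, mo a = mo i := by
          rw [Finset.sum_eq_single i]
          · intro b _ hb; exact hall b hb
          · intro h; exact absurd (Finset.mem_univ i) h
        refine Or.inl ⟨i, fun a => ?_⟩
        rcases eq_or_ne a i with rfl | ha
        · rw [Finsupp.single_apply, if_pos rfl]
          calc f a ≤ N := Finset.le_sup (Finset.mem_univ a)
          _ ≤ mo a := by omega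
        · rw [Finsupp.single_apply, if_neg (Ne.symm ha)]; omega
    have : (Ideal.Quotient.mk (truncIdeal K f) p) ^ N = 0 := by
      rw [← map_pow, Ideal.Quotient.eq_zero_iff_mem]; exact hpN
    exact hmin N this
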